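/- Let X be a real inner product space, let ψ : X → ℝ, let ψ* ∈ ℝ, let x̃ ∈ X, let D ≥ 0, let M₁, M₂, M₃ > 0, let {μ_k}_{k≥0} be positive reals, and let {x^k}_{k≥0} ⊆ X be a sequence such that for all k ∈ ℕ₀: (i) ψ(x^{k+1}) ≤ ψ(x^k); (ii) ψ(x^k) ≥ ψ*; (iii) ‖x^k − x̃‖ ≤ D; and (iv) (μ_k/M₁)·(ψ(x^{k+1}) − ψ*) ≤ ‖x^k − x̃‖² − ‖x^{k+1} − x̃‖² + M₂·μ_k² + M₃·(ψ(x^k) − ψ(x^{k+1})). Then for every K ∈ ℕ₀: (ψ(x^{K+1}) − ψ*)·∑_{k=⌈K/2⌉}^{K} μ_k ≤ M₁·(M₂·∑_{k=⌈K/2⌉}^{K} μ_k² + M₃·(ψ(x⁰) − ψ*) + D²). -/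

import Mathlib

open scoped InnerProductSpace BigOperators

lemma smba_telescope (f : ℕ → ℝ) (a b : ℕ) (h : a ≤ b) :
    ∑ k ∈ Finset.Icc a b, (f k - f (k + 1)) = f a - f (b + 1) := by
  induction b, h using Nat.le_induction with
  | base => simp
  | succ b hb ih =>
      rw [show Finset.Icc a (b + 1) = insert (b + 1) (Finset.Icc a b) by
        ext y; simp [Finset.mem_Icc, Finset.mem_insert]; omega,
        Finset.sum_insert (by simp), ih]
      ring

/-- Function-value complexity bound for the smoothing MBA method in the convex setting:
summing the per-iteration inequality over `k ∈ [⌈K/2⌉, K]` and telescoping yields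
`(ψ(x^{K+1}) - ψ*) ∑ μ_k ≤ M₁ (M₂ ∑ μ_k² + M₃ (ψ(x⁰) - ψ*) + D²)`. -/
theorem smba_convex_complexity_bound
    {X : Type*} [NormedAddCommGroup X] [InnerProductSpace ℝ X]
    (ψ : X → ℝ) (ψs : ℝ) (xt : X) (D : ℝ) (hD : 0 ≤ D)
    (M₁ M₂ M₃ : ℝ) (hM₁ : 0 < M₁) (hM₂ : 0 < M₂) (hM₃ : 0 < M₃)
    (μ : ℕ → ℝ) (hμ : ∀ k, 0 < μ k)
    (x : ℕ → X)
    (h1 : ∀ k : ℕ, ψ (x (k + 1)) ≤ ψ (x k))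
    (h2 : ∀ k : ℕ, ψs ≤ ψ (x k))
    (h3 : ∀ k : ℕ, ‖x k - xt‖ ≤ D)
    (h4 : ∀ k : ℕ, μ k / M₁ * (ψ (x (k + 1)) - ψs) ≤
      ‖x k - xt‖ ^ 2 - ‖x (k + 1) - xt‖ ^ 2 + M₂ * μ k ^ 2
        + M₃ * (ψ (x k) - ψ (x (k + 1)))) :
    ∀ K : ℕ, (ψ (x (K + 1)) - ψs) * ∑ k ∈ Finset.Icc ((K + 1) / 2) K, μ k ≤
      M₁ * (M₂ * ∑ k ∈ Finset.Icc ((K + 1) / 2) K, μ k ^ 2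
        + M₃ * (ψ (x 0) - ψs) + D ^ 2) := by
  intro K
  set m := (K + 1) / 2 with hm
  have hmK : m ≤ K := by omega
  have anti : Antitone (fun k => ψ (x k)) := antitone_nat_of_succ_le h1
  -- lower bound the summed LHS
  have step1 : (ψ (x (K + 1)) - ψs) / M₁ * ∑ k ∈ Finset.Icc m K, μ k ≤
      ∑ k ∈ Finset.Icc m K, μ k / M₁ * (ψ (x (k + 1)) - ψs) := by
    rw [Finset.mul_sum]
    apply Finset.sum_le_sum
    intro k hk
    have hkK : k ≤ K := (Finset.mem_Icc.mp hk).2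
    have hψ : ψ (x (K + 1)) ≤ ψ (x (k + 1)) := anti (by omega)
    have hμk : 0 ≤ μ k / M₁ := le_of_lt (div_pos (hμ k) hM₁)
    calc (ψ (x (K + 1)) - ψs) / M₁ * μ k = μ k / M₁ * (ψ (x (K + 1)) - ψs) := by ring
      _ ≤ μ k / M₁ * (ψ (x (k + 1)) - ψs) := by
          apply mul_le_mul_of_nonneg_left (by linarith) hμk
  -- sum the RHS and telescope
  have step2 : ∑ k ∈ Finset.Icc m K, (‖x k - xt‖ ^ 2 - ‖x (k + 1) - xt‖ ^ 2
        + M₂ * μ k ^ 2 + M₃ * (ψ (x k) - ψ (x (k + 1))))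
      = (‖x m - xt‖ ^ 2 - ‖x (K + 1) - xt‖ ^ 2)
        + M₂ * ∑ k ∈ Finset.Icc m K, μ k ^ 2
        + M₃ * (ψ (x m) - ψ (x (K + 1))) := by
    rw [Finset.sum_add_distrib, Finset.sum_add_distrib, ← Finset.mul_sum, ← Finset.mul_sum,
      smba_telescope (fun k => ‖x k - xt‖ ^ 2) m K hmK,
      smba_telescope (fun k => ψ (x k)) m K hmK]
  have hsum : ∑ k ∈ Finset.Icc m K, μ k / M₁ * (ψ (x (k + 1)) - ψs) ≤
      ∑ k ∈ Finset.Icc m K, (‖x k - xt‖ ^ 2 - ‖x (k + 1) - xt‖ ^ 2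
        + M₂ * μ k ^ 2 + M₃ * (ψ (x k) - ψ (x (k + 1)))) :=
    Finset.sum_le_sum fun k _ => h4 k
  have hnorm1 : ‖x m - xt‖ ^ 2 ≤ D ^ 2 :=
    pow_le_pow_left₀ (norm_nonneg _) (h3 m) 2
  have hnorm2 : (0:ℝ) ≤ ‖x (K + 1) - xt‖ ^ 2 := by positivity
  have hψm : ψ (x m) ≤ ψ (x 0) := anti (Nat.zero_le m)
  have hψK : ψs ≤ ψ (x (K + 1)) := h2 (K + 1)
  have key : (ψ (x (K + 1)) - ψs) / M₁ * ∑ k ∈ Finset.Icc m K, μ k ≤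
      M₂ * ∑ k ∈ Finset.Icc m K, μ k ^ 2 + M₃ * (ψ (x 0) - ψs) + D ^ 2 := by
    have := step1.trans (hsum.trans_eq step2)
    nlinarith [hM₃.le]
  have hrw : (ψ (x (K + 1)) - ψs) * ∑ k ∈ Finset.Icc m K, μ k
      = M₁ * ((ψ (x (K + 1)) - ψs) / M₁ * ∑ k ∈ Finset.Icc m K, μ k) := by
    field_simp
  rw [hrw]
  exact mul_le_mul_of_nonneg_left key hM₁.le
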